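/- Let n ≥ 3. The encoded vertices satisfy the recursion v^n(k) = 2^{C(n−1,2)} · (k − 1) + v^{n−1}(2^{n−2} + 1 − k) for k ∈ {1, …, 2^{n−2}}, and v^n(k) = 2^{C(n−1,2)} · (k − 1) + v^{n−1}(k − 2^{n−2}) for k ∈ {2^{n−2} + 1, …, 2^{n−1}}. -/
import Mathlib


/-- Integer encoding of a binary vector (MSB first): code(x) = Σ x_j 2^(m-j). -/
def code (x : List Bool) : ℕ := x.foldl (fun a b => 2 * a + (if b then 1 else 0)) 0

/-- m-bit binary representation (MSB first) of an integer k. -/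
def decode (m k : ℕ) : List Bool := (List.range m).map (fun j => k.testBit (m - 1 - j))

/-- Agreement-indicator map: λ(x) lists 𝟙(x_i = x_j) for pairs i < j in lex order. -/
def lam : List Bool → List Bool
  | [] => []
  | a :: t => (t.map (fun b => a == b)) ++ lam t

/-- Integer-level map λ#_n. -/
def lambdaSharp (n k : ℕ) : ℕ := code (lam (decode n k))

/-- Encoded vertices of 𝟙-CUT(n): v^n(k) = λ#_n(2^(n-1) + k - 1). -/
def v (n k : ℕ) : ℕ := lambdaSharp n (2 ^ (n - 1) + k - 1)

lemma foldl_shift (t : List Bool) (i : ℕ) :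
    t.foldl (fun a b => 2 * a + (if b then 1 else 0)) i
      = i * 2 ^ t.length + code t := by
  induction t generalizing i with
  | nil => simp [code]
  | cons a t ih =>
      simp only [List.foldl_cons, List.length_cons, code] at *
      rw [ih (2 * i + if a then 1 else 0), ih (2 * 0 + if a then 1 else 0)]
      ring

lemma code_cons (a : Bool) (t : List Bool) :
    code (a :: t) = (if a then 1 else 0) * 2 ^ t.length + code t := by
  have := foldl_shift t (2 * 0 + if a then 1 else 0)
  simp only [code, List.foldl_cons]
  rw [this]; simp only [code]; ring

lemma code_append (s t : List Bool) :
    code (s ++ t) = code s * 2 ^ t.length + code t := by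
  have := foldl_shift t (code s)
  simp only [code, List.foldl_append] at *
  exact this

lemma decode_succ (m k : ℕ) : decode (m + 1) k = k.testBit m :: decode m k := by
  simp only [decode, List.range_succ_eq_map, List.map_cons, List.map_map]
  congr 1
  simp only [List.map_inj_left, Function.comp_apply, List.mem_range]
  intro j hj
  congr 1
  omega

lemma decode_length (m k : ℕ) : (decode m k).length = m := by simp [decode]

lemma decode_mod (m k : ℕ) : decode m (k % 2 ^ m) = decode m k := by
  apply List.map_congr_left
  intro j hj
  simp only [List.mem_range] at hj
  rw [Nat.testBit_mod_two_pow]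
  have : m - 1 - j < m := by omega
  simp [this]

lemma code_decode (m k : ℕ) : code (decode m k) = k % 2 ^ m := by
  induction m with
  | zero => simp [decode, code, Nat.mod_one]
  | succ m ih =>
      rw [decode_succ, code_cons, decode_length, ih, Nat.mod_pow_succ,
        Nat.testBit_eq_decide_div_mod_eq]
      have : k / 2 ^ m % 2 = 0 ∨ k / 2 ^ m % 2 = 1 := by omega
      rcases this with h | h <;> simp [h] <;> ring

lemma testBit_compl (m : ℕ) : ∀ k j, k < 2 ^ m → j < m →
    (2 ^ m - 1 - k).testBit j = !(k.testBit j) := by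
  induction m with
  | zero => intro k j _ hj; omega
  | succ m ih =>
      intro k j hk hj
      match j with
      | 0 =>
          rw [Nat.testBit_zero, Nat.testBit_zero]
          have h2 : 2 ^ (m + 1) = 2 * 2 ^ m := by ring
          have hmod : (2 ^ (m + 1) - 1 - k) % 2 = 1 - k % 2 := by
            rw [pow_succ] at hk ⊢; omega
          rw [hmod]
          have : k % 2 = 0 ∨ k % 2 = 1 := by omega
          rcases this with h | h <;> simp [h]
      | j + 1 =>
          rw [Nat.testBit_succ, Nat.testBit_succ]
          have h2 : 2 ^ (m + 1) = 2 * 2 ^ m := by ring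
          have hdiv : (2 ^ (m + 1) - 1 - k) / 2 = 2 ^ m - 1 - k / 2 := by
            rw [pow_succ] at hk ⊢; omega
          rw [hdiv]
          exact ih (k / 2) j (by omega) (by omega)

lemma decode_compl (m k : ℕ) (hk : k < 2 ^ m) :
    decode m (2 ^ m - 1 - k) = (decode m k).map Bool.not := by
  simp only [decode, List.map_map]
  apply List.map_congr_left
  intro j hj
  simp only [List.mem_range] at hj
  simp only [Function.comp_apply]
  exact testBit_compl m k (m - 1 - j) hk (by omega)

lemma lam_map_not (t : List Bool) : lam (t.map Bool.not) = lam t := by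
  induction t with
  | nil => rfl
  | cons a t ih =>
      simp only [List.map_cons, lam, ih, List.map_map]
      congr 1
      apply List.map_congr_left
      intro b _
      cases a <;> cases b <;> rfl

lemma lam_length (t : List Bool) : (lam t).length = Nat.choose t.length 2 := by
  induction t with
  | nil => rfl
  | cons a t ih =>
      simp only [lam, List.length_append, List.length_map, ih, List.length_cons]
      rw [Nat.choose_succ_succ, Nat.choose_one_right]

lemma lam_true_cons (t : List Bool) : lam (true :: t) = t ++ lam t := by
  simp only [lam]
  congr 1
  exact List.map_congr_left (fun b _ => by cases b <;> rfl) |>.trans (List.map_id t)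

lemma key (m k : ℕ) (hk : 1 ≤ k) (hk2 : k ≤ 2 ^ (m + 1)) :
    v (m + 2) k = 2 ^ Nat.choose (m + 1) 2 * (k - 1) + lambdaSharp (m + 1) (k - 1) := by
  have hK : 2 ^ (m + 2 - 1) + k - 1 = 2 ^ (m + 1) + (k - 1) := by
    show 2 ^ (m + 1) + k - 1 = 2 ^ (m + 1) + (k - 1); omega
  have hlt : k - 1 < 2 ^ (m + 1) := by omega
  have htb : (2 ^ (m + 1) + (k - 1)).testBit (m + 1) = true := by
    rw [Nat.testBit_two_pow_add_eq, Nat.testBit_lt_two_pow hlt]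
    rfl
  have hmod : (2 ^ (m + 1) + (k - 1)) % 2 ^ (m + 1) = k - 1 := by
    rw [Nat.add_mod_left, Nat.mod_eq_of_lt hlt]
  rw [v, hK, lambdaSharp, decode_succ, htb, lam_true_cons, code_append, lam_length,
    decode_length]
  have hdec : decode (m + 1) (2 ^ (m + 1) + (k - 1)) = decode (m + 1) (k - 1) :=
    (decode_mod _ _).symm.trans (by rw [hmod])
  rw [hdec, code_decode, Nat.mod_eq_of_lt hlt, lambdaSharp]
  ring

theorem stmt_8 (n : ℕ) (hn : 3 ≤ n) (k : ℕ) (hk : 1 ≤ k) (hk2 : k ≤ 2 ^ (n - 1)) :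
    (k ≤ 2 ^ (n - 2) →
      v n k = 2 ^ Nat.choose (n - 1) 2 * (k - 1) + v (n - 1) (2 ^ (n - 2) + 1 - k)) ∧
    (2 ^ (n - 2) + 1 ≤ k →
      v n k = 2 ^ Nat.choose (n - 1) 2 * (k - 1) + v (n - 1) (k - 2 ^ (n - 2))) := by
  obtain ⟨m, rfl⟩ : ∃ m, n = m + 2 := ⟨n - 2, by omega⟩
  have h1 : m + 2 - 1 = m + 1 := rfl
  have h2 : m + 2 - 2 = m := rfl
  rw [h1, h2] at *
  have hkey := key m k hk hk2
  have hm : m + 1 - 1 = m := rfl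
  constructor
  · intro hle
    rw [hkey]
    congr 1
    -- v (m+1) (2^m + 1 - k) = lambdaSharp (m+1) (k-1)
    rw [v, hm, lambdaSharp, lambdaSharp]
    have harg : 2 ^ m + (2 ^ m + 1 - k) - 1 = 2 ^ (m + 1) - 1 - (k - 1) := by
      rw [pow_succ]; omega
    rw [harg, decode_compl (m + 1) (k - 1) (by rw [pow_succ]; omega), lam_map_not]
  · intro hge
    rw [hkey]
    congr 1
    rw [v, hm]
    congr 1
    omega
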